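/- For every λ > 0 and n ≥ 0, the half-integral of (1+t)^{λ−1/2} C_n^{(λ)}(t) satisfies (1/√π)∫_{−1}^x (1+t)^{λ−1/2} C_n^{(λ)}(t) (x−t)^{−1/2} dt = (Γ(λ+1/2)/(Γ(λ)(n+λ)))·(1+x)^{λ}·(C_n^{(λ+1/2)}(x) − C_{n−1}^{(λ+1/2)}(x)) for all x ∈ (−1,1], where C_{−1}^{(λ+1/2)} = 0. -/

import Mathlib

open Real intervalIntegral

/-- Ultraspherical (Gegenbauer) polynomials via the three-term recurrence
`(n+1) C_{n+1} = 2(n+λ) x C_n − (n+2λ−1) C_{n−1}`, `C_0 = 1`, `C_{-1} = 0`. -/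
noncomputable def Geg (l : ℝ) : ℕ → ℝ → ℝ
  | 0, _ => 1
  | 1, x => 2 * l * x
  | (n + 2), x =>
      (2 * ((n : ℝ) + 1 + l) * x * Geg l (n + 1) x
        - ((n : ℝ) + 2 * l) * Geg l n x) / ((n : ℝ) + 2)

/-- Ultraspherical polynomials with integer index, zero for negative index. -/
noncomputable def GegZ (l : ℝ) (n : ℤ) (x : ℝ) : ℝ :=
  if 0 ≤ n then Geg l n.toNat x else 0

noncomputable def gcoef (l : ℝ) (n k : ℕ) : ℝ :=
  (-1)^(n+k) * Real.Gamma (2*l+n+k) * Real.Gamma (l+1/2) /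
    (Real.Gamma (2*l) * Real.Gamma (l+1/2+k) * Real.Gamma ((n:ℝ)-k+1) * (Nat.factorial k : ℝ) * 2^k)

lemma Gamma_add_one' {z : ℝ} (h : 0 < z) : Real.Gamma (z+1) = z * Real.Gamma z :=
  Real.Gamma_add_one h.ne'

lemma Gamma_add_two {z : ℝ} (h : 0 < z) : Real.Gamma (z+2) = (z+1)*z*Real.Gamma z := by
  have e : z + 2 = (z+1)+1 := by ring
  rw [e, Gamma_add_one' (by linarith), Gamma_add_one' h]; ring

lemma Gamma_add_three {z : ℝ} (h : 0 < z) : Real.Gamma (z+3) = (z+2)*(z+1)*z*Real.Gamma z := by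
  have e : z + 3 = (z+2)+1 := by ring
  rw [e, Gamma_add_one' (by linarith), Gamma_add_two h]; ring

lemma gcoef_eq_zero {l : ℝ} {n k : ℕ} (h : n < k) : gcoef l n k = 0 := by
  obtain ⟨d, rfl⟩ : ∃ d, k = n+1+d := ⟨k-(n+1), by omega⟩
  have e : (n:ℝ) - (n+1+d:ℕ) + 1 = -(d:ℝ) := by push_cast; ring
  rw [gcoef, e, Real.Gamma_neg_nat_eq_zero]
  simp

lemma gcoef_formula (l : ℝ) (j k : ℕ) :
    gcoef l (k+j) k = (-1)^j * Real.Gamma (2*l+2*(k:ℝ)+(j:ℝ)) * Real.Gamma (l+1/2) /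
      (Real.Gamma (2*l) * Real.Gamma (l+1/2+k) * (Nat.factorial j : ℝ) *
        (Nat.factorial k : ℝ) * 2^k) := by
  rw [gcoef]
  rw [show ((k+j:ℕ):ℝ) - (k:ℝ) + 1 = (j:ℝ) + 1 by push_cast; ring]
  rw [Real.Gamma_nat_eq_factorial]
  rw [show (2*l + ((k+j:ℕ):ℝ) + (k:ℝ)) = 2*l+2*(k:ℝ)+(j:ℝ) by push_cast; ring]
  rw [show k+j+k = 2*k+j by omega, pow_add, pow_mul, neg_one_sq, one_pow, one_mul]


lemma gcoef_zero (l : ℝ) (hl : 0 < l) (m : ℕ) :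
    gcoef l m 0 = (-1)^m * Real.Gamma (2*l+(m:ℝ)) / (Real.Gamma (2*l) * (Nat.factorial m : ℝ)) := by
  have h := gcoef_formula l m 0
  simp only [Nat.zero_add, Nat.cast_zero, mul_zero, add_zero, zero_add, Nat.factorial_zero,
    Nat.cast_one, mul_one, pow_zero] at h
  rw [h]
  have h2 : Real.Gamma (l+1/2) ≠ 0 := (Real.Gamma_pos_of_pos (by linarith)).ne'
  field_simp

lemma keyE0 (l : ℝ) (hl : 0 < l) (n : ℕ) :
    ((n:ℝ)+2) * gcoef l (n+2) 0 + 2*((n:ℝ)+1+l) * gcoef l (n+1) 0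
      + ((n:ℝ)+2*l) * gcoef l n 0 = 0 := by
  rw [gcoef_zero l hl, gcoef_zero l hl, gcoef_zero l hl]
  have hb : (0:ℝ) < 2*l + n := by positivity
  rw [show (2*l + ((n+2:ℕ):ℝ)) = (2*l+(n:ℝ)) + 2 by push_cast; ring, Gamma_add_two hb]
  rw [show (2*l + ((n+1:ℕ):ℝ)) = (2*l+(n:ℝ)) + 1 by push_cast; ring, Gamma_add_one' hb]
  simp only [Nat.factorial_succ, pow_succ]
  have hg : Real.Gamma (2*l) ≠ 0 := (Real.Gamma_pos_of_pos (by linarith)).ne'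
  have hG : Real.Gamma (2*l+(n:ℝ)) ≠ 0 := (Real.Gamma_pos_of_pos hb).ne'
  have hf : (Nat.factorial n : ℝ) ≠ 0 := by positivity
  push_cast
  field_simp
  ring

lemma keyE (l : ℝ) (hl : 0 < l) (n k : ℕ) (hk : k ≤ n+1) :
    ((n:ℝ)+2) * gcoef l (n+2) (k+1) + 2*((n:ℝ)+1+l) * gcoef l (n+1) (k+1)
      + ((n:ℝ)+2*l) * gcoef l n (k+1) = 2*((n:ℝ)+1+l) * gcoef l (n+1) k := by
  have hg2l : Real.Gamma (2*l) ≠ 0 := (Real.Gamma_pos_of_pos (by linarith)).ne'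
  have hgh : Real.Gamma (l+1/2) ≠ 0 := (Real.Gamma_pos_of_pos (by linarith)).ne'
  rcases Nat.lt_or_ge k n with h | h
  · -- case A : k + 1 ≤ n
    obtain ⟨j, rfl⟩ : ∃ j, n = (k+1)+j := ⟨n-(k+1), by omega⟩
    conv_lhs => rw [show k+1+j+2 = (k+1)+(j+2) from by omega,
      show k+1+j+1 = (k+1)+(j+1) from by omega]
    conv_rhs => rw [show k+1+j+1 = k+(j+2) from by omega]
    rw [show k+1+j = (k+1)+j from by omega]
    rw [gcoef_formula, gcoef_formula, gcoef_formula, gcoef_formula]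
    push_cast
    have hbase : (0:ℝ) < 2*l+2*(k:ℝ)+(j:ℝ)+2 := by positivity
    have hH : (0:ℝ) < l+1/2+(k:ℝ) := by positivity
    rw [show 2*l+2*((k:ℝ)+1)+((j:ℝ)+2) = (2*l+2*(k:ℝ)+(j:ℝ)+2)+2 by ring, Gamma_add_two hbase]
    rw [show 2*l+2*((k:ℝ)+1)+((j:ℝ)+1) = (2*l+2*(k:ℝ)+(j:ℝ)+2)+1 by ring, Gamma_add_one' hbase]
    rw [show 2*l+2*((k:ℝ)+1)+(j:ℝ) = (2*l+2*(k:ℝ)+(j:ℝ)+2) by ring]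
    rw [show 2*l+2*(k:ℝ)+((j:ℝ)+2) = (2*l+2*(k:ℝ)+(j:ℝ)+2) by ring]
    rw [show l+1/2+((k:ℝ)+1) = (l+1/2+(k:ℝ))+1 by ring, Gamma_add_one' hH]
    simp only [Nat.factorial_succ, pow_succ]
    push_cast
    have hG : Real.Gamma (2*l+2*(k:ℝ)+(j:ℝ)+2) ≠ 0 := (Real.Gamma_pos_of_pos hbase).ne'
    have hHne : Real.Gamma (l+1/2+(k:ℝ)) ≠ 0 := (Real.Gamma_pos_of_pos hH).ne'
    have hj : (Nat.factorial j : ℝ) ≠ 0 := by positivity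
    have hkf : (Nat.factorial k : ℝ) ≠ 0 := by positivity
    have h2k : (2:ℝ)^k ≠ 0 := by positivity
    field_simp
    ring
  · obtain rfl | rfl : k = n ∨ k = n+1 := by omega
    · -- case B : k = n
      rw [show gcoef l k (k+1) = 0 from gcoef_eq_zero (by omega)]
      have F1 := gcoef_formula l 1 (k+1)
      have F2 := gcoef_formula l 0 (k+1)
      have F3 := gcoef_formula l 1 k
      norm_num at F1 F2 F3
      rw [show k+1+1 = k+2 from by omega] at F1
      rw [F1, F2, F3]
      push_cast
      have hbase : (0:ℝ) < 2*l+2*(k:ℝ)+1 := by positivity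
      have hH : (0:ℝ) < l+1/2+(k:ℝ) := by positivity
      rw [show 2*l+2*((k:ℝ)+1)+1 = (2*l+2*(k:ℝ)+1)+2 by ring, Gamma_add_two hbase]
      rw [show 2*l+2*((k:ℝ)+1) = (2*l+2*(k:ℝ)+1)+1 by ring, Gamma_add_one' hbase]
      rw [show 2*l+2*(k:ℝ)+1 = (2*l+2*(k:ℝ)+1) by ring]
      rw [show l+1/2+((k:ℝ)+1) = (l+1/2+(k:ℝ))+1 by ring, Gamma_add_one' hH]
      simp only [Nat.factorial_succ, pow_succ]
      push_cast
      have hG : Real.Gamma (2*l+2*(k:ℝ)+1) ≠ 0 := (Real.Gamma_pos_of_pos hbase).ne'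
      have hHne : Real.Gamma (l+1/2+(k:ℝ)) ≠ 0 := (Real.Gamma_pos_of_pos hH).ne'
      have hkf : (Nat.factorial k : ℝ) ≠ 0 := by positivity
      have h2k : (2:ℝ)^k ≠ 0 := by positivity
      field_simp
      ring
    · -- case C : k = n + 1
      rw [show gcoef l (n+1) (n+1+1) = 0 from gcoef_eq_zero (by omega),
          show gcoef l n (n+1+1) = 0 from gcoef_eq_zero (by omega)]
      have F1 := gcoef_formula l 0 (n+2)
      have F2 := gcoef_formula l 0 (n+1)
      norm_num at F1 F2
      rw [show n+1+1 = n+2 from by omega, F1, F2]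
      push_cast
      have hbase : (0:ℝ) < 2*l+2*((n:ℝ)+1) := by positivity
      have hH : (0:ℝ) < l+1/2+((n:ℝ)+1) := by positivity
      rw [show 2*l+2*((n:ℝ)+2) = (2*l+2*((n:ℝ)+1))+2 by ring, Gamma_add_two hbase]
      rw [show l+1/2+((n:ℝ)+2) = (l+1/2+((n:ℝ)+1))+1 by ring, Gamma_add_one' (by positivity)]
      simp only [Nat.factorial_succ, pow_succ]
      push_cast
      have hG : Real.Gamma (2*l+2*((n:ℝ)+1)) ≠ 0 := (Real.Gamma_pos_of_pos hbase).ne'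
      have hHne : Real.Gamma (l+1/2+((n:ℝ)+1)) ≠ 0 := (Real.Gamma_pos_of_pos hH).ne'
      have hnf : (Nat.factorial n : ℝ) ≠ 0 := by positivity
      have h2n : (2:ℝ)^n ≠ 0 := by positivity
      field_simp
      ring

lemma Geg_eq_sum (l : ℝ) (hl : 0 < l) (n : ℕ) (x : ℝ) :
    Geg l n x = ∑ k ∈ Finset.range (n+1), gcoef l n k * (1+x)^k := by
  have hg2l : Real.Gamma (2*l) ≠ 0 := (Real.Gamma_pos_of_pos (by linarith)).ne'
  have hgh : Real.Gamma (l+1/2) ≠ 0 := (Real.Gamma_pos_of_pos (by linarith)).ne'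
  induction n using Nat.twoStepInduction generalizing x with
  | zero =>
    have F := gcoef_formula l 0 0
    norm_num at F
    simp [Geg, F]
    rw [div_self (by positivity)]
  | one =>
    have F0 := gcoef_zero l hl 1
    have F1 := gcoef_formula l 0 1
    norm_num at F1
    rw [show ((1:ℕ):ℝ) = (1:ℝ) from by norm_num] at F0
    rw [show 2*l+(1:ℝ) = (2*l)+1 from by ring, Gamma_add_one' (by positivity)] at F0
    rw [show 2*l+(2:ℝ) = (2*l)+2 from by ring, Gamma_add_two (by positivity),
        show l+1/2+(1:ℝ) = (l+1/2)+1 from by ring, Gamma_add_one' (by positivity)] at F1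
    simp [Geg, Finset.sum_range_succ, F0, F1]
    field_simp
    ring
  | more n ih1 ih2 =>
    have hS1 : ∑ k ∈ Finset.range (n+2), gcoef l (n+1) k * (1+x)^k
        = ∑ k ∈ Finset.range (n+3), gcoef l (n+1) k * (1+x)^k := by
      conv_rhs => rw [show n+3 = (n+2)+1 from rfl, Finset.sum_range_succ,
        gcoef_eq_zero (by omega : n+1 < n+2), zero_mul, add_zero]
    have hS0 : ∑ k ∈ Finset.range (n+1), gcoef l n k * (1+x)^k
        = ∑ k ∈ Finset.range (n+3), gcoef l n k * (1+x)^k := by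
      conv_rhs => rw [show n+3 = (n+2)+1 from rfl, Finset.sum_range_succ,
        show n+2 = (n+1)+1 from rfl, Finset.sum_range_succ,
        gcoef_eq_zero (by omega : n < n+2), gcoef_eq_zero (by omega : n < n+1),
        zero_mul, zero_mul, add_zero, add_zero]
    have hT : ∑ k ∈ Finset.range (n+2), gcoef l (n+1) k * (1+x)^(k+1)
        = (∑ k ∈ Finset.range (n+2), gcoef l (n+1) k * (1+x)^k) * (1+x) := by
      rw [Finset.sum_mul]
      exact Finset.sum_congr rfl fun k _ => by ring
    have main : ((n:ℝ)+2) * ∑ k ∈ Finset.range (n+3), gcoef l (n+2) k * (1+x)^k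
        + 2*((n:ℝ)+1+l) * ∑ k ∈ Finset.range (n+3), gcoef l (n+1) k * (1+x)^k
        + ((n:ℝ)+2*l) * ∑ k ∈ Finset.range (n+3), gcoef l n k * (1+x)^k
        = 2*((n:ℝ)+1+l) * ∑ k ∈ Finset.range (n+2), gcoef l (n+1) k * (1+x)^(k+1) := by
      rw [Finset.mul_sum, Finset.mul_sum, Finset.mul_sum, ← Finset.sum_add_distrib,
        ← Finset.sum_add_distrib, Finset.mul_sum]
      rw [show n+3 = (n+2)+1 from rfl, Finset.sum_range_succ' _ (n+2)]
      simp only [pow_zero, mul_one]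
      rw [keyE0 l hl n, add_zero]
      refine Finset.sum_congr rfl fun k hk => ?_
      have hkle : k ≤ n+1 := by simpa using Nat.lt_succ_iff.mp (Finset.mem_range.mp hk)
      linear_combination (1+x)^(k+1) * keyE l hl n k hkle
    simp only [Geg]
    rw [ih1, ih2, div_eq_iff (by positivity : ((n:ℝ)+2) ≠ 0)]
    push_cast
    linear_combination (-1:ℝ)*main - 2*((n:ℝ)+1+l)*hT - ((n:ℝ)+2*l)*hS0
      - 2*((n:ℝ)+1+l)*hS1


lemma inv_sqrt_eq_rpow (y : ℝ) : (Real.sqrt y)⁻¹ = y ^ (-(1/2) : ℝ) := by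
  rcases le_or_gt 0 y with hy | hy
  · rw [Real.sqrt_eq_rpow, ← Real.rpow_neg hy]
  · rw [Real.sqrt_eq_zero'.mpr (le_of_lt hy), inv_zero]
    rw [Real.rpow_def_of_neg hy]
    have : Real.cos (-(1/2) * π) = 0 := by
      rw [show (-(1/2) : ℝ) * π = -(π/2) by ring, Real.cos_neg, Real.cos_pi_div_two]
    rw [this, mul_zero]

lemma betaIntegrable (a b : ℝ) (ha : 0 < a) (hb : 0 < b) :
    IntervalIntegrable (fun s : ℝ => s^(a-1) * (1-s)^(b-1)) MeasureTheory.volume 0 1 := by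
  have h1 : IntervalIntegrable (fun s : ℝ => s^(a-1) * (1-s)^(b-1))
      MeasureTheory.volume 0 (1/2) := by
    apply IntervalIntegrable.mul_continuousOn (intervalIntegrable_rpow' (by linarith))
    apply ContinuousOn.rpow_const (continuous_const.sub continuous_id).continuousOn
    intro s hs
    rw [Set.uIcc_of_le (by norm_num : (0:ℝ) ≤ 1/2)] at hs
    left
    have := hs.2
    intro h
    simp only [Pi.sub_apply, id_eq] at h
    nlinarith
  have h2 : IntervalIntegrable (fun s : ℝ => s^(a-1) * (1-s)^(b-1))
      MeasureTheory.volume (1/2) 1 := by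
    have base : IntervalIntegrable (fun u : ℝ => u^(b-1)) MeasureTheory.volume 0 (1/2) :=
      intervalIntegrable_rpow' (by linarith)
    have refl := base.comp_sub_left 1
    rw [show (1:ℝ)-0 = 1 by ring, show (1:ℝ)-1/2 = 1/2 by ring] at refl
    apply IntervalIntegrable.continuousOn_mul refl.symm
    apply ContinuousOn.rpow_const continuous_id.continuousOn
    intro s hs
    rw [Set.uIcc_of_le (by norm_num : (1:ℝ)/2 ≤ 1)] at hs
    left
    have := hs.1
    intro h
    simp only [id_eq] at h
    nlinarith
  exact h1.trans h2

lemma betaValue (a b : ℝ) (ha : 0 < a) (hb : 0 < b) :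
    ∫ s in (0:ℝ)..1, s^(a-1) * (1-s)^(b-1)
      = Real.Gamma a * Real.Gamma b / Real.Gamma (a+b) := by
  have hc := Complex.Gamma_mul_Gamma_eq_betaIntegral (s := (a:ℂ)) (t := (b:ℂ))
    (by simpa using ha) (by simpa using hb)
  rw [Complex.betaIntegral] at hc
  have key : (∫ x in (0:ℝ)..1, (x:ℂ)^((a:ℂ)-1) * (1-(x:ℂ))^((b:ℂ)-1))
      = ((∫ s in (0:ℝ)..1, s^(a-1)*(1-s)^(b-1) : ℝ) : ℂ) := by
    rw [← intervalIntegral.integral_ofReal]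
    apply intervalIntegral.integral_congr
    intro s hs
    rw [Set.uIcc_of_le (by norm_num : (0:ℝ) ≤ 1)] at hs
    have h1 : (0:ℝ) ≤ 1 - s := by linarith [hs.2]
    dsimp only
    rw [Complex.ofReal_mul, Complex.ofReal_cpow hs.1, Complex.ofReal_cpow h1]
    push_cast
    ring
  rw [key] at hc
  rw [Complex.Gamma_ofReal, Complex.Gamma_ofReal, show (a:ℂ)+(b:ℂ) = ((a+b:ℝ):ℂ) by push_cast; ring,
    Complex.Gamma_ofReal] at hc
  have hr : Real.Gamma a * Real.Gamma b
      = Real.Gamma (a+b) * ∫ s in (0:ℝ)..1, s^(a-1)*(1-s)^(b-1) := by exact_mod_cast hc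
  have hne : Real.Gamma (a+b) ≠ 0 := (Real.Gamma_pos_of_pos (by linarith)).ne'
  field_simp [hr]
  rw [hr]; ring

lemma halfintIntegrable (a x : ℝ) (ha : 0 < a) (hx : -1 < x) :
    IntervalIntegrable (fun t => (1+t)^(a-1) * (x-t)^(-(1/2):ℝ))
      MeasureTheory.volume (-1) x := by
  set m := (x-1)/2 with hm
  have hm1 : -1 ≤ m := by rw [hm]; linarith
  have hmx : m < x := by rw [hm]; linarith
  have h1 : IntervalIntegrable (fun t => (1+t)^(a-1) * (x-t)^(-(1/2):ℝ))
      MeasureTheory.volume (-1) m := by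
    have base : IntervalIntegrable (fun u : ℝ => u^(a-1)) MeasureTheory.volume 0 (1+m) :=
      intervalIntegrable_rpow' (by linarith)
    have g := base.comp_add_left 1
    rw [show (0:ℝ)-1 = -1 by ring, show (1+m)-1 = m by ring] at g
    apply IntervalIntegrable.mul_continuousOn g
    apply ContinuousOn.rpow_const (continuous_const.sub continuous_id).continuousOn
    intro t ht
    rw [Set.uIcc_of_le hm1] at ht
    left
    have := ht.2
    intro h
    simp only [Pi.sub_apply, id_eq] at h
    nlinarith
  have h2 : IntervalIntegrable (fun t => (1+t)^(a-1) * (x-t)^(-(1/2):ℝ))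
      MeasureTheory.volume m x := by
    have base : IntervalIntegrable (fun u : ℝ => u^(-(1/2):ℝ)) MeasureTheory.volume 0 (x-m) :=
      intervalIntegrable_rpow' (by norm_num)
    have g := base.comp_sub_left x
    rw [show x-0 = x by ring, show x-(x-m) = m by ring] at g
    apply IntervalIntegrable.continuousOn_mul g.symm
    apply ContinuousOn.rpow_const (continuous_const.add continuous_id).continuousOn
    intro t ht
    rw [Set.uIcc_of_le (le_of_lt hmx)] at ht
    left
    have := ht.1
    intro h
    simp only [Pi.add_apply, id_eq] at h
    rw [hm] at this
    nlinarith
  exact h1.trans h2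

lemma halfint (a x : ℝ) (ha : 0 < a) (hx : -1 < x) :
    ∫ t in (-1:ℝ)..x, (1+t)^(a-1) * (x-t)^(-(1/2):ℝ)
      = Real.Gamma a * Real.sqrt π / Real.Gamma (a+1/2) * (1+x)^(a-1/2) := by
  have hy : (0:ℝ) < 1+x := by linarith
  have sub := intervalIntegral.integral_comp_mul_add
    (f := fun t => (1+t)^(a-1) * (x-t)^(-(1/2):ℝ)) (a := 0) (b := 1) hy.ne' (-1)
  rw [show (1+x)*0 + -1 = -1 by ring, show (1+x)*1 + -1 = x by ring] at sub
  have congr1 : (∫ s in (0:ℝ)..1, (1+((1+x)*s + -1))^(a-1) * (x-((1+x)*s + -1))^(-(1/2):ℝ))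
      = ∫ s in (0:ℝ)..1, ((1+x)^(a-1) * (1+x)^(-(1/2):ℝ)) * (s^(a-1) * (1-s)^((1/2:ℝ)-1)) := by
    apply intervalIntegral.integral_congr
    intro s hs
    rw [Set.uIcc_of_le (by norm_num : (0:ℝ) ≤ 1)] at hs
    have h1s : (0:ℝ) ≤ 1 - s := by linarith [hs.2]
    dsimp only
    rw [show 1+((1+x)*s + -1) = (1+x)*s by ring, show x-((1+x)*s + -1) = (1+x)*(1-s) by ring]
    rw [Real.mul_rpow hy.le hs.1, Real.mul_rpow hy.le h1s,
      show (1/2:ℝ)-1 = -(1/2) by norm_num]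
    ring
  rw [congr1, intervalIntegral.integral_const_mul, betaValue a (1/2) ha (by norm_num),
    Real.Gamma_one_half_eq] at sub
  rw [smul_eq_mul] at sub
  have hI : (∫ t in (-1:ℝ)..x, (1+t)^(a-1) * (x-t)^(-(1/2):ℝ))
      = (1+x) * ((1+x)^(a-1) * (1+x)^(-(1/2):ℝ) * (Real.Gamma a * Real.sqrt π / Real.Gamma (a+1/2))) := by
    rw [sub, ← mul_assoc, mul_inv_cancel₀ hy.ne', one_mul]
  rw [hI]
  have hpow : (1+x) * ((1+x)^(a-1) * (1+x)^(-(1/2):ℝ)) = (1+x)^(a-1/2) := by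
    nth_rewrite 1 [← Real.rpow_one (1+x)]
    rw [← Real.rpow_add hy, ← Real.rpow_add hy, show (1:ℝ)+(a-1+ -(1/2)) = a-1/2 by ring]
  calc (1+x) * ((1+x)^(a-1) * (1+x)^(-(1/2):ℝ) * (Real.Gamma a * Real.sqrt π / Real.Gamma (a+1/2)))
      = ((1+x) * ((1+x)^(a-1) * (1+x)^(-(1/2):ℝ))) * (Real.Gamma a * Real.sqrt π / Real.Gamma (a+1/2)) := by ring
    _ = Real.Gamma a * Real.sqrt π / Real.Gamma (a+1/2) * (1+x)^(a-1/2) := by rw [hpow]; ring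


lemma coeffC (l : ℝ) (hl : 0 < l) (m k : ℕ) (hm : 1 ≤ m) (hk : k ≤ m) :
    gcoef l m k * (Real.Gamma (l+1/2+k) / Real.Gamma (l+1+k))
      = Real.Gamma (l+1/2) / (Real.Gamma l * ((m:ℝ)+l))
        * (gcoef (l+1/2) m k - gcoef (l+1/2) (m-1) k) := by
  have hgl : Real.Gamma l ≠ 0 := (Real.Gamma_pos_of_pos hl).ne'
  have hg2l : Real.Gamma (2*l) ≠ 0 := (Real.Gamma_pos_of_pos (by linarith)).ne'
  have hgh : Real.Gamma (l+1/2) ≠ 0 := (Real.Gamma_pos_of_pos (by linarith)).ne'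
  rcases Nat.lt_or_ge k m with h | h
  · obtain ⟨j, rfl⟩ : ∃ j, m = k+(j+1) := ⟨m-k-1, by omega⟩
    rw [show k+(j+1)-1 = k+j from by omega]
    rw [gcoef_formula, gcoef_formula, gcoef_formula]
    push_cast
    have hQ : (0:ℝ) < 2*l+2*(k:ℝ)+(j:ℝ) := by positivity
    rw [show 2*l+2*((k:ℝ))+((j:ℝ)+1) = (2*l+2*(k:ℝ)+(j:ℝ))+1 by ring,
        Gamma_add_one' (z := 2*l+2*(k:ℝ)+(j:ℝ)) hQ]
    rw [show 2*(l+1/2)+2*((k:ℝ))+((j:ℝ)+1) = (2*l+2*(k:ℝ)+(j:ℝ))+2 by ring,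
        Gamma_add_two (z := 2*l+2*(k:ℝ)+(j:ℝ)) hQ]
    rw [show 2*(l+1/2)+2*((k:ℝ))+(j:ℝ) = (2*l+2*(k:ℝ)+(j:ℝ))+1 by ring,
        Gamma_add_one' (z := 2*l+2*(k:ℝ)+(j:ℝ)) hQ]
    rw [show l+1/2+(1:ℝ)/2+(k:ℝ) = l+1+(k:ℝ) by ring]
    rw [show l+1/2+(1:ℝ)/2 = l+1 by ring, Gamma_add_one' (z := l) hl]
    rw [show 2*(l+(1:ℝ)/2) = 2*l+1 by ring, Gamma_add_one' (z := 2*l) (by linarith)]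
    simp only [Nat.factorial_succ]
    push_cast
    have hGQ : Real.Gamma (2*l+2*(k:ℝ)+(j:ℝ)) ≠ 0 := (Real.Gamma_pos_of_pos hQ).ne'
    have hHk : Real.Gamma (l+1/2+(k:ℝ)) ≠ 0 :=
      (Real.Gamma_pos_of_pos (by positivity)).ne'
    have hLk : Real.Gamma (l+1+(k:ℝ)) ≠ 0 :=
      (Real.Gamma_pos_of_pos (by positivity)).ne'
    have hjf : (Nat.factorial j : ℝ) ≠ 0 := by positivity
    have hkf : (Nat.factorial k : ℝ) ≠ 0 := by positivity
    have h2k : (2:ℝ)^k ≠ 0 := by positivity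
    have hml : ((k:ℝ)+((j:ℝ)+1)+l) ≠ 0 := by positivity
    field_simp
    ring
  · obtain rfl : k = m := le_antisymm hk h
    rw [show gcoef (l+1/2) (k-1) k = 0 from gcoef_eq_zero (by omega), sub_zero]
    have F1 := gcoef_formula l 0 k
    have F2 := gcoef_formula (l+1/2) 0 k
    norm_num at F1 F2
    rw [F1, F2]
    have hR : (0:ℝ) < 2*l+2*(k:ℝ) := by positivity
    rw [show 2*(l+1/2)+2*((k:ℝ)) = (2*l+2*(k:ℝ))+1 by ring,
        Gamma_add_one' (z := 2*l+2*(k:ℝ)) hR]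
    rw [show l+1/2+(1:ℝ)/2+(k:ℝ) = l+1+(k:ℝ) by ring]
    rw [show l+1/2+(1:ℝ)/2 = l+1 by ring, Gamma_add_one' (z := l) hl]
    rw [show 2*(l+(1:ℝ)/2) = 2*l+1 by ring, Gamma_add_one' (z := 2*l) (by linarith)]
    have hGR : Real.Gamma (2*l+2*(k:ℝ)) ≠ 0 := (Real.Gamma_pos_of_pos hR).ne'
    have hHk : Real.Gamma (l+1/2+(k:ℝ)) ≠ 0 :=
      (Real.Gamma_pos_of_pos (by positivity)).ne'
    have hLk : Real.Gamma (l+1+(k:ℝ)) ≠ 0 :=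
      (Real.Gamma_pos_of_pos (by positivity)).ne'
    have hkf : (Nat.factorial k : ℝ) ≠ 0 := by positivity
    have h2k : (2:ℝ)^k ≠ 0 := by positivity
    have hml : ((k:ℝ)+l) ≠ 0 := by positivity
    field_simp
    ring

theorem stmt9 (l : ℝ) (hl : 0 < l) (n : ℤ) (hn : 0 ≤ n) (x : ℝ)
    (hx : x ∈ Set.Ioc (-1 : ℝ) 1) :
    (1 / Real.sqrt π) *
        ∫ t in (-1 : ℝ)..x, (1 + t) ^ (l - 1/2) * GegZ l n t / Real.sqrt (x - t) =
      Real.Gamma (l + 1/2) / (Real.Gamma l * ((n : ℝ) + l)) * (1 + x) ^ l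
        * (GegZ (l + 1/2) n x - GegZ (l + 1/2) (n - 1) x) := by
  obtain ⟨hx1, hx2⟩ := hx
  have hy : (0:ℝ) < 1+x := by linarith
  have hsp : Real.sqrt π ≠ 0 := by positivity
  have hgl : Real.Gamma l ≠ 0 := (Real.Gamma_pos_of_pos hl).ne'
  rcases eq_or_lt_of_le hn with hn0 | hn1
  · -- n = 0
    subst hn0
    have e1 : GegZ l 0 = fun t => Geg l 0 t := by
      funext t; rw [GegZ, if_pos le_rfl]; rfl
    have e2 : GegZ (l+1/2) 0 x = 1 := by rw [GegZ, if_pos le_rfl]; rfl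
    have e3 : GegZ (l+1/2) (0-1) x = 0 := by rw [GegZ, if_neg (by norm_num)]
    rw [e1, e2, e3]
    have hc : (∫ t in (-1:ℝ)..x, (1 + t) ^ (l - 1/2) * Geg l 0 t / Real.sqrt (x - t))
        = ∫ t in (-1:ℝ)..x, (1+t)^((l+1/2)-1) * (x-t)^(-(1/2):ℝ) := by
      apply intervalIntegral.integral_congr
      intro t _
      show (1 + t) ^ (l - 1/2) * Geg l 0 t / Real.sqrt (x - t) = _
      rw [show Geg l 0 t = 1 from rfl, mul_one, div_eq_mul_inv, inv_sqrt_eq_rpow,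
        show (l+1/2)-1 = l - 1/2 by ring]
    rw [hc, halfint (l+1/2) x (by linarith) hx1]
    rw [show l+1/2+1/2 = l+1 by ring, Gamma_add_one' (z := l) hl,
      show l+1/2-1/2 = l by ring]
    push_cast
    field_simp
    ring
  · -- 0 < n
    set m := n.toNat with hmdef
    have hm : 1 ≤ m := by omega
    have hnm : (n:ℝ) = (m:ℝ) := by
      have := Int.toNat_of_nonneg hn
      exact_mod_cast congrArg (Int.cast : ℤ → ℝ) this.symm
    have e1 : GegZ l n = fun t => Geg l m t := by
      funext t; rw [GegZ, if_pos hn]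
    have e2 : GegZ (l+1/2) n x = Geg (l+1/2) m x := by rw [GegZ, if_pos hn]
    have e3 : GegZ (l+1/2) (n-1) x = Geg (l+1/2) (m-1) x := by
      rw [GegZ, if_pos (by omega : (0:ℤ) ≤ n-1), show (n-1).toNat = m-1 from by omega]
    rw [e1, e2, e3, hnm]
    -- transform integral
    have hcong : (∫ t in (-1:ℝ)..x, (1 + t) ^ (l - 1/2) * Geg l m t / Real.sqrt (x - t))
        = ∫ t in (-1:ℝ)..x, ∑ k ∈ Finset.range (m+1),
            gcoef l m k * ((1+t)^((l+1/2+(k:ℝ))-1) * (x-t)^(-(1/2):ℝ)) := by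
      apply intervalIntegral.integral_congr_ae
      apply Filter.Eventually.of_forall
      intro t ht
      rw [Set.uIoc_of_le (le_of_lt hx1)] at ht
      have ht0 : (0:ℝ) < 1+t := by linarith [ht.1]
      rw [Geg_eq_sum l hl m t, div_eq_mul_inv, inv_sqrt_eq_rpow, Finset.mul_sum,
        Finset.sum_mul]
      refine Finset.sum_congr rfl fun k _ => ?_
      rw [show (l+1/2+(k:ℝ))-1 = (l-1/2) + (k:ℝ) by ring, Real.rpow_add ht0,
        Real.rpow_natCast]
      ring
    have hswap : (∫ t in (-1:ℝ)..x, ∑ k ∈ Finset.range (m+1),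
            gcoef l m k * ((1+t)^((l+1/2+(k:ℝ))-1) * (x-t)^(-(1/2):ℝ)))
        = ∑ k ∈ Finset.range (m+1),
            gcoef l m k * ∫ t in (-1:ℝ)..x, (1+t)^((l+1/2+(k:ℝ))-1) * (x-t)^(-(1/2):ℝ) := by
      rw [intervalIntegral.integral_finset_sum]
      · exact Finset.sum_congr rfl fun k _ => intervalIntegral.integral_const_mul _ _
      · intro k _
        exact (halfintIntegrable (l+1/2+(k:ℝ)) x (by positivity) hx1).const_mul _
    rw [hcong, hswap]
    have hval : ∀ k : ℕ, (∫ t in (-1:ℝ)..x, (1+t)^((l+1/2+(k:ℝ))-1) * (x-t)^(-(1/2):ℝ))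
        = Real.Gamma (l+1/2+(k:ℝ)) * Real.sqrt π / Real.Gamma (l+1+(k:ℝ))
          * ((1+x)^l * (1+x)^k) := by
      intro k
      rw [halfint (l+1/2+(k:ℝ)) x (by positivity) hx1,
        show l+1/2+(k:ℝ)+1/2 = l+1+(k:ℝ) by ring,
        show l+1/2+(k:ℝ)-1/2 = l+(k:ℝ) by ring,
        Real.rpow_add hy, Real.rpow_natCast]
    have hdiff : Geg (l+1/2) m x - Geg (l+1/2) (m-1) x
        = ∑ k ∈ Finset.range (m+1),
            (gcoef (l+1/2) m k - gcoef (l+1/2) (m-1) k) * (1+x)^k := by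
      rw [Geg_eq_sum (l+1/2) (by linarith) m x, Geg_eq_sum (l+1/2) (by linarith) (m-1) x,
        show m-1+1 = m from by omega]
      have hext : ∑ k ∈ Finset.range m, gcoef (l+1/2) (m-1) k * (1+x)^k
          = ∑ k ∈ Finset.range (m+1), gcoef (l+1/2) (m-1) k * (1+x)^k := by
        rw [Finset.sum_range_succ, gcoef_eq_zero (by omega), zero_mul, add_zero]
      rw [hext, ← Finset.sum_sub_distrib]
      exact Finset.sum_congr rfl fun k _ => by ring
    rw [hdiff, Finset.mul_sum, Finset.mul_sum]
    refine Finset.sum_congr rfl fun k hk => ?_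
    have hkm : k ≤ m := by
      have := Finset.mem_range.mp hk; omega
    have hC := coeffC l hl m k hm hkm
    rw [hval k]
    have hGk : Real.Gamma (l+1+(k:ℝ)) ≠ 0 := (Real.Gamma_pos_of_pos (by positivity)).ne'
    field_simp at hC ⊢
    linear_combination hC
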